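/- If a sequence {x_k} in a real linear n-normed space X converges b-weakly to some x ∈ X, then the sequence of real numbers {‖x_k, b₂, ..., bₙ‖} is bounded. -/
import Mathlib


open Function Filter Topology

/-- An `n`-norm on a real vector space `X` (axioms N1-N4). -/
structure NNorm (n : ℕ) (X : Type*) [AddCommGroup X] [Module ℝ X] where
  toFun : (Fin n → X) → ℝ
  eq_zero_iff : ∀ v : Fin n → X, toFun v = 0 ↔ ¬ LinearIndependent ℝ v
  perm_invariant : ∀ (σ : Equiv.Perm (Fin n)) (v : Fin n → X), toFun (v ∘ σ) = toFun v
  smul_eq : ∀ (α : ℝ) (v : Fin n → X) (i : Fin n),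
      toFun (Function.update v i (α • v i)) = |α| * toFun v
  add_le : ∀ (v : Fin n → X) (i : Fin n) (x y : X),
      toFun (Function.update v i (x + y)) ≤
        toFun (Function.update v i x) + toFun (Function.update v i y)

variable {n : ℕ} {X : Type*} [AddCommGroup X] [Module ℝ X]

/-- The seminorm `x ↦ ‖x, b₂, …, bₙ‖` obtained by fixing the vectors `b` in all slots
but the first. -/
noncomputable def bsem (N : NNorm (n + 1) X) (b : Fin (n + 1) → X) (x : X) : ℝ :=
  N.toFun (Function.update b 0 x)

section Generic

variable {V : Type*} [AddCommGroup V] [Module ℝ V]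

/-- A `b`-linear functional: additive and homogeneous in its first argument. -/
def IsBLinear (T : V → ℝ) : Prop :=
  (∀ x y : V, T (x + y) = T x + T y) ∧ ∀ (k : ℝ) (x : V), T (k • x) = k * T x

/-- A bounded `b`-linear functional with respect to a seminorm `p`. -/
def IsBddBLinearP (p : V → ℝ) (T : V → ℝ) : Prop :=
  IsBLinear T ∧ ∃ M > 0, ∀ x : V, |T x| ≤ M * p x

/-- The norm of a bounded `b`-linear functional with respect to a seminorm `p`. -/
noncomputable def bnormP (p : V → ℝ) (T : V → ℝ) : ℝ :=
  sInf {M : ℝ | 0 < M ∧ ∀ x : V, |T x| ≤ M * p x}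

end Generic

/-- A bounded `b`-linear functional on `X × ⟨b₂⟩ × ⋯ × ⟨bₙ⟩`. -/
def IsBddBLinear (N : NNorm (n + 1) X) (b : Fin (n + 1) → X) (T : X → ℝ) : Prop :=
  IsBddBLinearP (bsem N b) T

/-- The norm of a bounded `b`-linear functional on `X × ⟨b₂⟩ × ⋯ × ⟨bₙ⟩`. -/
noncomputable def bnorm (N : NNorm (n + 1) X) (b : Fin (n + 1) → X) (T : X → ℝ) : ℝ :=
  bnormP (bsem N b) T

/-- Convergence of a sequence in a linear `n`-normed space. -/
def NConv (N : NNorm (n + 1) X) (u : ℕ → X) (x : X) : Prop :=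
  ∀ v : Fin (n + 1) → X,
    Tendsto (fun k => N.toFun (Function.update v 0 (u k - x))) atTop (nhds 0)

/-- A subspace is closed if it contains all limits of its convergent sequences. -/
def IsClosedSub (N : NNorm (n + 1) X) (W : Submodule ℝ X) : Prop :=
  ∀ u : ℕ → X, (∀ k, u k ∈ W) → ∀ x : X, NConv N u x → x ∈ W

/-- `b`-weak convergence of a sequence. -/
def BWeakConv (N : NNorm (n + 1) X) (b : Fin (n + 1) → X) (u : ℕ → X) (x : X) : Prop :=
  ∀ T : X → ℝ, IsBddBLinear N b T →
    Tendsto (fun k => T (u k)) atTop (nhds (T x))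

section Aux

variable {n : ℕ} {X : Type*} [AddCommGroup X] [Module ℝ X]

lemma bsem_zero (N : NNorm (n + 1) X) (b : Fin (n + 1) → X) : bsem N b 0 = 0 := by
  rw [bsem, (N.eq_zero_iff _)]
  intro h
  exact h.ne_zero 0 (by simp)

lemma bsem_smul (N : NNorm (n + 1) X) (b : Fin (n + 1) → X) (a : ℝ) (x : X) :
    bsem N b (a • x) = |a| * bsem N b x := by
  have := N.smul_eq a (Function.update b 0 x) 0
  simpa [Function.update_idem, bsem] using this

lemma bsem_add_le (N : NNorm (n + 1) X) (b : Fin (n + 1) → X) (x y : X) :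
    bsem N b (x + y) ≤ bsem N b x + bsem N b y := N.add_le b 0 x y

lemma bsem_neg (N : NNorm (n + 1) X) (b : Fin (n + 1) → X) (x : X) :
    bsem N b (-x) = bsem N b x := by
  have := bsem_smul N b (-1) x
  simpa using this

end Aux

theorem stmt11 (N : NNorm (n + 1) X) (b : Fin (n + 1) → X)
    (hdim : ↑(n + 1) ≤ Module.rank ℝ X) (u : ℕ → X) (x : X)
    (hx : BWeakConv N b u x) :
    ∃ C : ℝ, ∀ k, bsem N b (u k) ≤ C := by
  classical
  -- Equip `X` with the seminorm `bsem N b`.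
  let p : AddGroupSeminorm X :=
    { toFun := bsem N b
      map_zero' := bsem_zero N b
      add_le' := bsem_add_le N b
      neg' := bsem_neg N b }
  letI : SeminormedAddCommGroup X := p.toSeminormedAddCommGroup
  letI : NormedSpace ℝ X :=
    { (inferInstance : Module ℝ X) with
      norm_smul_le := fun a y => le_of_eq (bsem_smul N b a y) }
  have hnorm : ∀ y : X, ‖y‖ = bsem N b y := fun _ => rfl
  -- Pass to the separation quotient, a genuine normed space.
  set Q := SeparationQuotient X
  set v : ℕ → Q := fun k => SeparationQuotient.mk (u k) with hv
  -- every continuous linear functional on Q gives a bounded b-linear functional on X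
  have key : ∀ f : StrongDual ℝ Q, ∃ C, ∀ k,
      ‖NormedSpace.inclusionInDoubleDual ℝ Q (v k) f‖ ≤ C := by
    intro f
    set T : X → ℝ := fun z => f (SeparationQuotient.mk z) with hT
    have hbdd : IsBddBLinear N b T := by
      refine ⟨⟨fun y z => ?_, fun c z => ?_⟩, ‖f‖ + 1, by positivity, fun z => ?_⟩
      · simp [hT, SeparationQuotient.mk_add, map_add]
      · simp [hT, SeparationQuotient.mk_smul, map_smul]
      · calc |T z| = ‖f (SeparationQuotient.mk z)‖ := rfl
          _ ≤ ‖f‖ * ‖SeparationQuotient.mk z‖ := f.le_opNorm _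
          _ = ‖f‖ * bsem N b z := by rw [SeparationQuotient.norm_mk, hnorm]
          _ ≤ (‖f‖ + 1) * bsem N b z := by
              have h0 : (0:ℝ) ≤ bsem N b z := by rw [← hnorm]; exact norm_nonneg _
              nlinarith [norm_nonneg f]
    have htends : Tendsto (fun k => T (u k)) atTop (nhds (T x)) := hx T hbdd
    obtain ⟨C, hC⟩ := htends.norm.bddAbove_range
    exact ⟨C, fun k => hC ⟨k, rfl⟩⟩
  -- Banach–Steinhaus on the dual of Q
  obtain ⟨C, hC⟩ := banach_steinhaus (fun f => by
    obtain ⟨c, hc⟩ := key f; exact ⟨c, hc⟩ :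
      ∀ f, ∃ c, ∀ k, ‖(fun k => NormedSpace.inclusionInDoubleDual ℝ Q (v k)) k f‖ ≤ c)
  refine ⟨C, fun k => ?_⟩
  have hiso : ‖NormedSpace.inclusionInDoubleDual ℝ Q (v k)‖ = ‖v k‖ :=
    (NormedSpace.inclusionInDoubleDualLi ℝ (E := Q)).norm_map (v k)
  have : ‖v k‖ ≤ C := hiso ▸ hC k
  rwa [hv, SeparationQuotient.norm_mk, hnorm] at this
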